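/- Let R be a commutative ring, G a group, and H, K finite subgroups of G. Then there is an R-module isomorphism ψ : R[H\G/K] → Hom_{RG}(R[G/H], R[G/K]), sending the double coset HxK to the RG-module homomorphism determined by gH ↦ Σ_{u ∈ H/(H ∩ xKx⁻¹)} guxK. -/

import Mathlib

open Finsupp

namespace Stmt4Aux

variable {G : Type*} [Group G] (H K : Subgroup G)

/-- The pairing `β(gH, cK) = H(g⁻¹c)K`. -/
def beta : G ⧸ H → G ⧸ K → DoubleCoset.Quotient (H : Set G) (K : Set G) := fun a c =>
  Quotient.liftOn₂' a c (fun g c => DoubleCoset.mk H K (g⁻¹ * c)) (by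
    intro g c g' c' hg hc
    rw [QuotientGroup.leftRel_apply] at hg hc
    rw [DoubleCoset.eq]
    exact ⟨(g⁻¹ * g')⁻¹, H.inv_mem hg, c⁻¹ * c', hc, by group⟩)

lemma beta_mk (g c : G) : beta H K (g : G ⧸ H) (c : G ⧸ K) = DoubleCoset.mk H K (g⁻¹ * c) := rfl

lemma beta_smul (g : G) (a : G ⧸ H) (c : G ⧸ K) :
    beta H K (g • a) (g • c) = beta H K a c := by
  induction a using QuotientGroup.induction_on with
  | H a =>
  induction c using QuotientGroup.induction_on with
  | H c =>
  rw [MulAction.Quotient.smul_mk, MulAction.Quotient.smul_mk, beta_mk, beta_mk]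
  congr 1
  simp only [smul_eq_mul]
  group

def fib (a : G ⧸ H) (D : DoubleCoset.Quotient (H : Set G) (K : Set G)) : Set (G ⧸ K) :=
  {c | beta H K a c = D}

lemma mem_fib {a : G ⧸ H} {c : G ⧸ K} {D} : c ∈ fib H K a D ↔ beta H K a c = D := Iff.rfl

lemma fib_eq (g x : G) :
    fib H K (g : G ⧸ H) (DoubleCoset.mk H K x)
      = Set.range (fun h : H => ((g * h * x : G) : G ⧸ K)) := by
  ext c
  induction c using QuotientGroup.induction_on with
  | H c =>
  rw [mem_fib, beta_mk, DoubleCoset.eq]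
  constructor
  · rintro ⟨h, hh, k, hk, hx⟩
    refine ⟨⟨h⁻¹, H.inv_mem hh⟩, ?_⟩
    show ((g * h⁻¹ * x : G) : G ⧸ K) = (c : G ⧸ K)
    rw [QuotientGroup.eq]
    have : (g * h⁻¹ * x)⁻¹ * c = k⁻¹ := by rw [hx]; group
    exact this ▸ K.inv_mem hk
  · rintro ⟨⟨h, hh⟩, hc⟩
    have hk : (g * h * x)⁻¹ * c ∈ K := QuotientGroup.eq.mp hc
    exact ⟨h⁻¹, H.inv_mem hh, ((g * h * x)⁻¹ * c)⁻¹, K.inv_mem hk, by group⟩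

lemma fib_finite [Finite H] (a : G ⧸ H) (D : DoubleCoset.Quotient (H : Set G) (K : Set G)) :
    (fib H K a D).Finite := by
  obtain ⟨g, rfl⟩ := QuotientGroup.mk_surjective a
  rw [show D = DoubleCoset.mk H K D.out from (DoubleCoset.out_eq' H K D).symm, fib_eq]
  exact Set.finite_range _

variable (R : Type*) [CommRing R]

noncomputable def chi {α : Type*} (S : Finset α) : α →₀ R := ∑ c ∈ S, single c (1 : R)

lemma chi_apply {α : Type*} (S : Finset α) (c : α) [Decidable (c ∈ S)] :
    chi R S c = if c ∈ S then 1 else 0 := by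
  classical
  simp [chi, Finsupp.finset_sum_apply, Finsupp.single_apply]

variable [Finite H]

noncomputable def Bmap (D : DoubleCoset.Quotient (H : Set G) (K : Set G)) :
    (G ⧸ H →₀ R) →ₗ[R] (G ⧸ K →₀ R) :=
  Finsupp.lift _ R _ (fun a => chi R (fib_finite H K a D).toFinset)

lemma Bmap_single (D) (a : G ⧸ H) :
    Bmap H K R D (single a 1) = chi R (fib_finite H K a D).toFinset := by
  rw [Bmap, lift_apply, sum_single_index, one_smul]
  exact zero_smul _ _

noncomputable def psi :
    (DoubleCoset.Quotient (H : Set G) (K : Set G) →₀ R) →ₗ[R]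
      ((G ⧸ H →₀ R) →ₗ[R] (G ⧸ K →₀ R)) :=
  Finsupp.lift _ R _ (Bmap H K R)

lemma psi_single (D) : psi H K R (single D 1) = Bmap H K R D := by
  rw [psi, lift_apply, sum_single_index, one_smul]
  exact zero_smul _ _

lemma psi_single_apply (w) (a : G ⧸ H) (c : G ⧸ K) :
    (psi H K R w (single a 1)) c = w (beta H K a c) := by
  classical
  rw [psi, lift_apply, Finsupp.sum, LinearMap.coe_sum, Finset.sum_apply,
    Finsupp.finset_sum_apply]
  have : ∀ D ∈ w.support, ((w D • Bmap H K R D) (single a (1:R))) c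
      = if beta H K a c = D then w D else 0 := by
    intro D _
    simp only [LinearMap.smul_apply, Finsupp.smul_apply, Bmap_single, chi_apply,
      Set.Finite.mem_toFinset, mem_fib, smul_eq_mul, mul_ite, mul_one, mul_zero]
  rw [Finset.sum_congr rfl this, Finset.sum_ite_eq w.support (beta H K a c) (fun D => w D)]
  split
  · rfl
  · next h => exact (Finsupp.notMem_support_iff.mp h).symm

lemma mapDomain_smul_apply (g : G) (u : G ⧸ K →₀ R) (c : G ⧸ K) :
    Finsupp.mapDomain (fun y => g • y) u (g • c) = u c :=
  Finsupp.mapDomain_apply (MulAction.injective g) u c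

lemma psi_equivariant (w) (g : G) (v : G ⧸ H →₀ R) :
    psi H K R w (Finsupp.mapDomain (fun y => g • y) v)
      = Finsupp.mapDomain (fun y => g • y) (psi H K R w v) := by
  induction v using Finsupp.induction_linear with
  | zero => simp
  | add f h hf hh => rw [mapDomain_add, map_add, hf, hh, map_add, mapDomain_add]
  | single a b =>
    have hb : (single a b : G ⧸ H →₀ R) = b • single a 1 := by
      rw [smul_single, smul_eq_mul, mul_one]
    rw [hb, Finsupp.mapDomain_smul, map_smul, map_smul, Finsupp.mapDomain_smul]
    congr 1
    rw [mapDomain_single]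
    ext c
    rw [show c = g • (g⁻¹ • c) from (smul_inv_smul g c).symm,
      mapDomain_smul_apply, psi_single_apply, psi_single_apply, beta_smul]

lemma psi_inj : Function.Injective (psi H K R) := by
  rw [injective_iff_map_eq_zero]
  intro w hw
  ext D
  have h1 := psi_single_apply H K R w ((1 : G) : G ⧸ H) ((Quotient.out D : G) : G ⧸ K)
  rw [hw, beta_mk, inv_one, one_mul, DoubleCoset.out_eq'] at h1
  simp only [LinearMap.zero_apply, Finsupp.coe_zero, Pi.zero_apply] at h1
  exact h1.symm

lemma psi_surj_equivariant (f : (G ⧸ H →₀ R) →ₗ[R] (G ⧸ K →₀ R))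
    (hf : ∀ (g : G) (v : G ⧸ H →₀ R),
      f (Finsupp.mapDomain (fun y => g • y) v) = Finsupp.mapDomain (fun y => g • y) (f v)) :
    ∃ w, psi H K R w = f := by
  classical
  set v0 : G ⧸ K →₀ R := f (single ((1 : G) : G ⧸ H) 1) with hv0
  have hinv : ∀ (h : H) (c : G ⧸ K), v0 ((h : G) • c) = v0 c := by
    intro h c
    have h2 := hf (h : G) (single ((1 : G) : G ⧸ H) 1)
    rw [mapDomain_single, MulAction.Quotient.smul_mk] at h2
    have h3 : (((h : G) • (1 : G) : G) : G ⧸ H) = ((1 : G) : G ⧸ H) := by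
      rw [QuotientGroup.eq]
      simpa using h.2
    rw [h3, ← hv0] at h2
    conv_lhs => rw [h2]
    exact mapDomain_smul_apply K R (h : G) v0 c
  have hfiber : ∀ c : G ⧸ K, v0 (((Quotient.out (beta H K ((1:G) : G ⧸ H) c) : G)) : G ⧸ K) = v0 c := by
    intro c
    induction c using QuotientGroup.induction_on with
    | H y =>
    rw [beta_mk, inv_one, one_mul]
    obtain ⟨h, k, hh, hk, hout⟩ := DoubleCoset.mk_out_eq_mul H K y
    have e1 : (((DoubleCoset.mk H K y).out : G) : G ⧸ K) = ((h * y : G) : G ⧸ K) := by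
      rw [hout, QuotientGroup.eq]
      have : (h * y * k)⁻¹ * (h * y) = k⁻¹ := by group
      exact this ▸ K.inv_mem hk
    rw [e1, show ((h * y : G) : G ⧸ K) = h • ((y : G) : G ⧸ K) from
      (MulAction.Quotient.smul_mk K h y).symm]
    exact hinv ⟨h, hh⟩ ((y : G) : G ⧸ K)
  have hs : Function.Injective
      (fun D : DoubleCoset.Quotient (H : Set G) (K : Set G) => ((Quotient.out D : G) : G ⧸ K)) := by
    intro D D' hDD'
    have key : ∀ D₀ : DoubleCoset.Quotient (H : Set G) (K : Set G),
        beta H K ((1:G) : G ⧸ H) ((Quotient.out D₀ : G) : G ⧸ K) = D₀ := by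
      intro D₀
      rw [beta_mk, inv_one, one_mul, DoubleCoset.out_eq']
    rw [← key D, ← key D']
    exact congrArg _ hDD'
  refine ⟨Finsupp.comapDomain _ v0 hs.injOn, ?_⟩
  apply Finsupp.lhom_ext
  intro a b
  have hb : (single a b : G ⧸ H →₀ R) = b • single a 1 := by
    rw [smul_single, smul_eq_mul, mul_one]
  rw [hb, map_smul, map_smul]
  congr 1
  induction a using QuotientGroup.induction_on with
  | H g =>
  have e2 : (single ((g : G) : G ⧸ H) (1:R)) = Finsupp.mapDomain (fun y => g • y)
      (single ((1 : G) : G ⧸ H) 1) := by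
    rw [mapDomain_single, MulAction.Quotient.smul_mk, smul_eq_mul, mul_one]
  rw [e2, psi_equivariant, hf]
  congr 1
  ext c
  rw [psi_single_apply, Finsupp.comapDomain_apply, ← hv0]
  exact hfiber c

lemma psi_formula (x g : G) :
    psi H K R (single (DoubleCoset.mk H K x) 1) (single ((g : G ⧸ H)) 1)
      = ∑ᶠ u : H ⧸ ((K.map (MulAut.conj x).toMonoidHom).subgroupOf H),
          single (((g * ((Quotient.out u : H) : G) * x : G) : G ⧸ K)) (1 : R) := by
  classical
  haveI : Fintype (H ⧸ ((K.map (MulAut.conj x).toMonoidHom).subgroupOf H)) := Fintype.ofFinite _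
  rw [finsum_eq_sum_of_fintype, psi_single, Bmap_single]
  set θ : H ⧸ ((K.map (MulAut.conj x).toMonoidHom).subgroupOf H) → G ⧸ K :=
    fun u => ((g * ((Quotient.out u : H) : G) * x : G) : G ⧸ K) with hθ
  have keymem : ∀ (u : H ⧸ ((K.map (MulAut.conj x).toMonoidHom).subgroupOf H)) (h : H),
      (QuotientGroup.mk h : H ⧸ ((K.map (MulAut.conj x).toMonoidHom).subgroupOf H)) = u →
      θ u = ((g * (h : G) * x : G) : G ⧸ K) := by
    intro u h hu
    have hmem : (Quotient.out u)⁻¹ * h ∈ (K.map (MulAut.conj x).toMonoidHom).subgroupOf H := by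
      rw [← QuotientGroup.eq, QuotientGroup.out_eq']
      exact hu.symm
    rw [Subgroup.mem_subgroupOf, Subgroup.mem_map] at hmem
    obtain ⟨k, hk, hconj⟩ := hmem
    simp only [MulEquiv.coe_toMonoidHom, MulAut.conj_apply] at hconj
    push_cast at hconj
    show ((g * ((Quotient.out u : H) : G) * x : G) : G ⧸ K) = _
    rw [QuotientGroup.eq]
    have h3 : (g * ((Quotient.out u : H) : G) * x)⁻¹ * (g * (h : G) * x) = k := by
      have hk2 : k = x⁻¹ * (((Quotient.out u : H) : G)⁻¹ * (h : G)) * x := by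
        rw [← hconj]; group
      rw [hk2]; group
    exact h3 ▸ hk
  have hinj : Function.Injective θ := by
    intro u u' huu'
    have hk : (g * ((Quotient.out u : H) : G) * x)⁻¹ * (g * ((Quotient.out u' : H) : G) * x) ∈ K :=
      QuotientGroup.eq.mp huu'
    have hmem : (Quotient.out u)⁻¹ * (Quotient.out u')
        ∈ (K.map (MulAut.conj x).toMonoidHom).subgroupOf H := by
      rw [Subgroup.mem_subgroupOf, Subgroup.mem_map]
      refine ⟨(g * ((Quotient.out u : H) : G) * x)⁻¹ * (g * ((Quotient.out u' : H) : G) * x),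
        hk, ?_⟩
      simp only [MulEquiv.coe_toMonoidHom, MulAut.conj_apply]
      push_cast
      group
    rw [← QuotientGroup.out_eq' u, ← QuotientGroup.out_eq' u']
    exact QuotientGroup.eq.mpr hmem
  have hrange : Finset.univ.image θ
      = (fib_finite H K (g : G ⧸ H) (DoubleCoset.mk H K x)).toFinset := by
    ext c
    simp only [Finset.mem_image, Finset.mem_univ, true_and, Set.Finite.mem_toFinset]
    rw [fib_eq]
    constructor
    · rintro ⟨u, rfl⟩
      exact ⟨Quotient.out u, rfl⟩
    · rintro ⟨h, rfl⟩
      exact ⟨QuotientGroup.mk h, keymem _ h rfl⟩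
  rw [chi, ← hrange, Finset.sum_image (fun a _ b _ hab => hinj hab)]

end Stmt4Aux

/-- For finite subgroups `H, K ≤ G` there is an `R`-module isomorphism
`ψ : R[H\G/K] ≅ Hom_{RG}(R[G/H], R[G/K])` sending the double coset `HxK` to the map
`gH ↦ Σ_{u ∈ H/(H ∩ xKx⁻¹)} guxK`.  Here `Hom_{RG}` is realised as the `R`-linear maps
commuting with the `G`-actions, so `ψ` is injective with range exactly the equivariant maps. -/
theorem stmt_4 (R : Type*) [CommRing R] {G : Type*} [Group G] (H K : Subgroup G)
    [Finite H] [Finite K] :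
    ∃ ψ : (DoubleCoset.Quotient (H : Set G) (K : Set G) →₀ R) →ₗ[R]
        ((G ⧸ H →₀ R) →ₗ[R] (G ⧸ K →₀ R)),
      Function.Injective ψ ∧
      (∀ f : (G ⧸ H →₀ R) →ₗ[R] (G ⧸ K →₀ R),
        (∀ (g : G) (v : G ⧸ H →₀ R),
          f (Finsupp.mapDomain (fun x => g • x) v)
            = Finsupp.mapDomain (fun x => g • x) (f v)) ↔ f ∈ Set.range ψ) ∧
      (∀ x g : G,
        ψ (Finsupp.single (DoubleCoset.mk H K x) 1) (Finsupp.single ((g : G ⧸ H)) 1)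
          = ∑ᶠ u : H ⧸ ((K.map (MulAut.conj x).toMonoidHom).subgroupOf H),
              Finsupp.single (((g * ((Quotient.out u : H) : G) * x : G) : G ⧸ K)) (1 : R)) := by
  refine ⟨Stmt4Aux.psi H K R, Stmt4Aux.psi_inj H K R, fun f => ⟨?_, ?_⟩, fun x g =>
    Stmt4Aux.psi_formula H K R x g⟩
  · intro hf
    obtain ⟨w, hw⟩ := Stmt4Aux.psi_surj_equivariant H K R f hf
    exact ⟨w, hw⟩
  · rintro ⟨w, rfl⟩ g v
    exact Stmt4Aux.psi_equivariant H K R w g v
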